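/- Let n have at least two distinct prime factors. In Cl₂(ZMod n), if (e,u) and (f,v) are distinct vertices with e = f ≠ 1 and u*v ≠ 1, then the distance between (e,u) and (f,v) equals 2. -/
import Mathlib


/-- Vertices of the clean graph `Cl₂(R)`: pairs `(e, u)` with `e` a nonzero
idempotent of `R` and `u` a unit of `R`. -/
def cleanVertex (R : Type*) [Ring R] : Type _ := {e : R // e * e = e ∧ e ≠ 0} × Rˣ

/-- The graph `Cl₂(R)`: distinct vertices `(e,u)`, `(f,v)` are adjacent iff
`ef = fe = 0` or `uv = vu = 1`. -/
def cleanGraph (R : Type*) [Ring R] : SimpleGraph (cleanVertex R) :=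
  SimpleGraph.fromRel (fun x y =>
    (x.1.1 * y.1.1 = 0 ∧ y.1.1 * x.1.1 = 0) ∨
    ((x.2 : R) * (y.2 : R) = 1 ∧ (y.2 : R) * (x.2 : R) = 1))

/-- Wiener index: sum of distances over unordered pairs of vertices. -/
noncomputable def wienerIndex {V : Type*} (G : SimpleGraph V) : ℕ :=
  (∑ᶠ x : V, ∑ᶠ y : V, G.dist x y) / 2

/-- Matching number: maximum size of a matching. -/
noncomputable def matchingNumber {V : Type*} (G : SimpleGraph V) : ℕ :=
  sSup {k | ∃ M : G.Subgraph, M.IsMatching ∧ M.edgeSet.ncard = k}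

theorem dist_eq_two_same_idempotent (n : ℕ) (h : 2 ≤ n.primeFactors.card)
    (x y : cleanVertex (ZMod n)) (hxy : x ≠ y)
    (he : x.1.1 = y.1.1) (he1 : x.1.1 ≠ 1)
    (huv : (x.2 : ZMod n) * (y.2 : ZMod n) ≠ 1) :
    (cleanGraph (ZMod n)).dist x y = 2 := by
  obtain ⟨⟨e, hee, he0⟩, u⟩ := x
  obtain ⟨⟨f, hff, hf0⟩, v⟩ := y
  simp only at he he1 huv
  subst he
  -- the middle vertex
  have hfe : (1 - e) * (1 - e) = 1 - e := by linear_combination hee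
  have hf0' : (1 - e) ≠ 0 := by
    intro hc
    apply he1
    have : e = 1 := by linear_combination -hc
    exact this
  set z : cleanVertex (ZMod n) := (⟨1 - e, hfe, hf0'⟩, 1) with hz
  have hne : e ≠ 1 - e := by
    intro hc
    apply he0
    calc e = e * e := hee.symm
    _ = e * (1 - e) := by rw [← hc]
    _ = e - e * e := by ring
    _ = 0 := by rw [hee]; ring
  have hprod : e * (1 - e) = 0 := by
    calc e * (1 - e) = e - e * e := by ring
    _ = 0 := by rw [hee]; ring
  have hxz : (cleanGraph (ZMod n)).Adj (⟨e, hee, he0⟩, u) z := by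
    refine ⟨?_, Or.inl (Or.inl ⟨hprod, by rw [mul_comm]; exact hprod⟩)⟩
    intro hc
    exact hne (congrArg (fun p => p.1.1) hc)
  have hzy : (cleanGraph (ZMod n)).Adj z (⟨e, hee, he0⟩, v) := by
    refine ⟨?_, Or.inl (Or.inl ⟨by rw [mul_comm]; exact hprod, hprod⟩)⟩
    intro hc
    exact hne (congrArg (fun p => p.1.1) hc).symm
  have hnadj : ¬ (cleanGraph (ZMod n)).Adj (⟨e, hee, he0⟩, u) (⟨e, hee, he0⟩, v) := by
    rintro ⟨-, h1 | h2⟩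
    · rcases h1 with ⟨h1, -⟩ | ⟨h1, -⟩
      · exact he0 (hee ▸ h1)
      · exact huv h1
    · rcases h2 with ⟨h1, -⟩ | ⟨-, h1⟩
      · exact he0 (hee ▸ h1)
      · exact huv h1
  have hle : (cleanGraph (ZMod n)).dist (⟨e, hee, he0⟩, u) (⟨e, hee, he0⟩, v) ≤ 2 :=
    SimpleGraph.dist_le (SimpleGraph.Walk.cons hxz hzy.toWalk)
  have hpos := SimpleGraph.Reachable.pos_dist_of_ne
    ⟨SimpleGraph.Walk.cons hxz hzy.toWalk⟩ hxy
  have h1 : (cleanGraph (ZMod n)).dist (⟨e, hee, he0⟩, u) (⟨e, hee, he0⟩, v) ≠ 1 :=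
    fun hd => hnadj (SimpleGraph.dist_eq_one_iff_adj.mp hd)
  omega
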